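/- Let N = 4 and let ρ_DS = Σ_{k=0}^4 p_k |S_k^4⟩⟨S_k^4| be a diagonal symmetric 4-qubit state (p_k ≥ 0, Σ_k p_k = 1). Then for every real α with (3√6 − 8)/2 ≤ α ≤ 5(√21 − 3)/18, the matrix σ = 𝟙_S + α·ρ_DS is fully separable. -/

import Mathlib

open scoped ComplexOrder

noncomputable section

/-- Separability of an `N`-qubit matrix across the bipartition `X : Xᶜ`. -/
def SepAcross {N : ℕ} (X : Finset (Fin N))
    (σ : Matrix (Fin N → Fin 2) (Fin N → Fin 2) ℂ) : Prop :=
  ∃ (K : ℕ)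
    (A : Fin K → Matrix ({i // i ∈ X} → Fin 2) ({i // i ∈ X} → Fin 2) ℂ)
    (B : Fin K → Matrix ({i // i ∈ Xᶜ} → Fin 2) ({i // i ∈ Xᶜ} → Fin 2) ℂ),
    (∀ k, (A k).PosSemidef) ∧ (∀ k, (B k).PosSemidef) ∧
    ∀ x y, σ x y =
      ∑ k, A k (fun i => x i.1) (fun i => y i.1) * B k (fun i => x i.1) (fun i => y i.1)

/-- Partial transpose with respect to the qubits in `X`. -/
def pt {N : ℕ} (X : Finset (Fin N))
    (σ : Matrix (Fin N → Fin 2) (Fin N → Fin 2) ℂ) :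
    Matrix (Fin N → Fin 2) (Fin N → Fin 2) ℂ :=
  fun x y => σ (fun i => if i ∈ X then y i else x i) (fun i => if i ∈ X then x i else y i)

/-- The Dicke state `|S_k^N⟩`. -/
def dicke (N k : ℕ) : (Fin N → Fin 2) → ℂ :=
  fun x => if (Finset.univ.filter (fun i => x i = 1)).card = k
    then ((Real.sqrt (N.choose k))⁻¹ : ℝ) else 0

/-- The projector onto the symmetric subspace of `N` qubits. -/
def symProj (N : ℕ) : Matrix (Fin N → Fin 2) (Fin N → Fin 2) ℂ :=
  fun x y => ∑ k ∈ Finset.range (N + 1), dicke N k x * star (dicke N k y)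

/-- Full separability of an `N`-qubit matrix. -/
def FullySep {N : ℕ} (σ : Matrix (Fin N → Fin 2) (Fin N → Fin 2) ℂ) : Prop :=
  ∃ (K : ℕ) (A : Fin K → Fin N → Matrix (Fin 2) (Fin 2) ℂ),
    (∀ k i, (A k i).PosSemidef) ∧
    ∀ x y, σ x y = ∑ k, ∏ i, A k i (x i) (y i)

/-- The second Pauli matrix. -/
def pauliY : Matrix (Fin 2) (Fin 2) ℂ := !![0, -Complex.I; Complex.I, 0]

/-- The `N`-qubit operator acting as `σy` on each qubit in `X` and trivially elsewhere. -/
def pauliYat {N : ℕ} (X : Finset (Fin N)) :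
    Matrix (Fin N → Fin 2) (Fin N → Fin 2) ℂ :=
  fun x y => ∏ i, if i ∈ X then pauliY (x i) (y i) else (if x i = y i then 1 else 0)

/-- `(σy@X) · ρ^{T_X} · (σy@X)`. -/
def tildeAt {N : ℕ} (X : Finset (Fin N))
    (ρ : Matrix (Fin N → Fin 2) (Fin N → Fin 2) ℂ) :
    Matrix (Fin N → Fin 2) (Fin N → Fin 2) ℂ :=
  pauliYat X * pt X ρ * pauliYat X

/-- The Hankel matrix `M_l(q)` with entries `q_{i+j+l} / (N choose (i+j+l))`. -/
def hankel (N l : ℕ) (q : ℕ → ℝ) :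
    Matrix (Fin ((N - l) / 2 + 1)) (Fin ((N - l) / 2 + 1)) ℝ :=
  fun i j => q ((i : ℕ) + j + l) / (N.choose ((i : ℕ) + j + l))

/-- The diagonal symmetric state `Σ_k p_k |S_k^N⟩⟨S_k^N|`. -/
def rhoDS (N : ℕ) (p : ℕ → ℝ) : Matrix (Fin N → Fin 2) (Fin N → Fin 2) ℂ :=
  fun x y => ∑ k ∈ Finset.range (N + 1), (p k : ℂ) * dicke N k x * star (dicke N k y)

lemma fin2_cases (b : Fin 2) : b = 0 ∨ b = 1 := by omega

lemma wt_eq (x : Fin 4 → Fin 2) :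
    (Finset.univ.filter (fun i => x i = 1)).card = ∑ i, ((x i : ℕ)) := by
  rw [Finset.card_filter]
  refine Finset.sum_congr rfl fun i _ => ?_
  rcases fin2_cases (x i) with h | h <;> rw [h] <;> norm_num

lemma wt_le (x : Fin 4 → Fin 2) : (∑ i, ((x i : ℕ))) ≤ 4 := by
  rw [Fin.sum_univ_four]
  have := (x 0).isLt; have := (x 1).isLt; have := (x 2).isLt; have := (x 3).isLt
  omega

lemma rhoDS_apply (q : ℕ → ℝ) (x y : Fin 4 → Fin 2) :
    rhoDS 4 q x y = if (∑ i, ((x i : ℕ))) = (∑ i, ((y i : ℕ)))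
      then ((q (∑ i, ((x i : ℕ))) / (Nat.choose 4 (∑ i, ((x i : ℕ))) : ℝ) : ℝ) : ℂ)
      else 0 := by
  unfold rhoDS dicke
  simp only [wt_eq]
  set n := ∑ i, ((x i : ℕ)) with hn
  set m := ∑ i, ((y i : ℕ)) with hm
  by_cases h : n = m
  · rw [if_pos h, ← h]
    rw [Finset.sum_eq_single n]
    · have hC : (0:ℝ) < (Nat.choose 4 n : ℝ) := by
        have := Nat.choose_pos (show n ≤ 4 from wt_le x)
        positivity
      simp only [eq_self_iff_true, if_true]
      simp only [Complex.star_def, Complex.conj_ofReal]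
      rw [mul_assoc, ← Complex.ofReal_mul]
      rw [show (Real.sqrt (Nat.choose 4 n))⁻¹ * (Real.sqrt (Nat.choose 4 n))⁻¹
            = ((Nat.choose 4 n : ℝ))⁻¹ by
        rw [← mul_inv, Real.mul_self_sqrt hC.le]]
      rw [div_eq_mul_inv]
      push_cast
      ring
    · intro k _ hk
      simp [Ne.symm hk]
    · intro hmem
      exact absurd (Finset.mem_range.mpr (by have := wt_le x; omega)) hmem
  · rw [if_neg h]
    refine Finset.sum_eq_zero fun k _ => ?_
    by_cases h1 : n = k <;> by_cases h2 : m = k <;> simp [h1, h2] <;> omega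
lemma prod_ite_pow (g0 g1 : ℂ) (x : Fin 4 → Fin 2) :
    (∏ i, if x i = 1 then g1 else g0)
      = g0 ^ (4 - ∑ i, ((x i : ℕ))) * g1 ^ (∑ i, ((x i : ℕ))) := by
  rw [Fin.prod_univ_four, Fin.sum_univ_four]
  rcases fin2_cases (x 0) with h0 | h0 <;> rcases fin2_cases (x 1) with h1 | h1 <;>
    rcases fin2_cases (x 2) with h2 | h2 <;> rcases fin2_cases (x 3) with h3 | h3 <;>
    simp only [h0, h1, h2, h3, Fin.isValue, Fin.val_zero, Fin.val_one,
      if_true, one_ne_zero, zero_ne_one, if_false, reduceIte, Nat.reduceAdd, Nat.reduceSub] <;>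
    ring



def zet : ℂ := Complex.exp (2 * Real.pi * Complex.I / 8)

lemma zet_prim : IsPrimitiveRoot zet 8 := by
  have h := Complex.isPrimitiveRoot_exp 8 (by norm_num)
  convert h using 2
  rw [zet]; norm_num

lemma zet_pow_eight : zet ^ 8 = 1 := zet_prim.pow_eq_one

lemma zet_mul_star : zet * star zet = 1 := by
  have h : star zet = Complex.exp (-(2 * Real.pi * Complex.I / 8)) := by
    show (starRingEnd ℂ) zet = _
    rw [zet, ← Complex.exp_conj]
    congr 1
    rw [map_div₀, map_mul, map_mul, Complex.conj_I, Complex.conj_ofReal]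
    simp only [map_ofNat]
    ring
  rw [h, zet, ← Complex.exp_add]
  simp

lemma phase_sum (n m : ℕ) (hn : n ≤ 4) (hm : m ≤ 4) :
    ∑ j : Fin 8, (zet ^ n * (star zet) ^ m) ^ (j : ℕ) = if n = m then 8 else 0 := by
  have hne : zet ≠ 0 := by
    rw [zet]; exact Complex.exp_ne_zero _
  have hstar : star zet = zet⁻¹ := by
    field_simp
    rw [mul_comm]; exact zet_mul_star
  by_cases h : n = m
  · subst h
    rw [hstar, ← mul_pow, mul_inv_cancel₀ hne]
    simp
  · rw [if_neg h]
    set μ := zet ^ n * (star zet) ^ m with hμdef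
    have hμ8 : μ ^ 8 = 1 := by
      rw [hμdef, mul_pow, ← pow_mul, ← pow_mul, mul_comm n 8, mul_comm m 8, pow_mul, pow_mul,
        zet_pow_eight, one_pow, ← star_pow, zet_pow_eight]
      simp
    have hμ1 : μ ≠ 1 := by
      intro hc
      apply h
      refine zet_prim.pow_inj (by omega) (by omega) ?_
      have h2 : zet ^ n * (zet ^ m)⁻¹ = 1 := by
        rw [← hc, hμdef, hstar, inv_pow]
      field_simp at h2
      exact h2
    rw [Fin.sum_univ_eq_sum_range (fun j => μ ^ j) 8]
    rw [geom_sum_eq hμ1, hμ8]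
    simp

lemma outer_psd (v : Fin 2 → ℂ) :
    (Matrix.of fun a b => v a * star (v b)).PosSemidef := by
  refine Matrix.posSemidef_iff_dotProduct_mulVec.mpr ⟨?_, ?_⟩
  · ext a b
    simp [Matrix.conjTranspose_apply, mul_comm]
  · intro z
    have h : dotProduct (star z) ((Matrix.of fun a b => v a * star (v b)).mulVec z)
        = (∑ a, star (z a) * v a) * star (∑ a, star (z a) * v a) := by
      simp only [dotProduct, Matrix.mulVec, Pi.star_apply, Matrix.of_apply,
        star_sum, star_mul, star_star]
      rw [Finset.sum_mul]
      refine Finset.sum_congr rfl fun a _ => ?_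
      rw [Finset.mul_sum, Finset.mul_sum]
      refine Finset.sum_congr rfl fun b _ => ?_
      ring
    rw [h]
    exact mul_star_self_nonneg _

def RepQ (q : ℕ → ℝ) : Prop :=
  ∃ (K : ℕ) (w A B : Fin K → ℝ),
    (∀ k, 0 ≤ w k) ∧ (∀ k, 0 ≤ A k) ∧ (∀ k, 0 ≤ B k) ∧
    ∀ n, n ≤ 4 → ∑ k, w k * A k ^ (4 - n) * B k ^ n = q n / (Nat.choose 4 n : ℝ)

lemma prod_if_zero (z : ℂ) : (∏ i : Fin 4, if i = 0 then z else 1) = z := by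
  rw [Fin.prod_univ_four]
  simp

lemma repq_fullySep (q : ℕ → ℝ) (h : RepQ q) : FullySep (rhoDS 4 q) := by
  obtain ⟨K, w, A, B, hw, hA, hB, hmom⟩ := h
  set V : Fin K × Fin 8 → Fin 4 → Fin 2 → ℂ := fun r i b =>
    (if i = 0 then ((Real.sqrt (w r.1 / 8) : ℝ) : ℂ) else 1) *
    (if b = 1 then ((Real.sqrt (B r.1) : ℝ) : ℂ) * zet ^ (r.2 : ℕ)
      else ((Real.sqrt (A r.1) : ℝ) : ℂ)) with hV
  refine ⟨K * 8, fun r i =>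
      Matrix.of fun a b => V (finProdFinEquiv.symm r) i a * star (V (finProdFinEquiv.symm r) i b),
    fun r i => outer_psd _, fun x y => ?_⟩
  rw [← Equiv.sum_comp finProdFinEquiv
    (fun r => ∏ i, (Matrix.of fun a b => V (finProdFinEquiv.symm r) i a *
      star (V (finProdFinEquiv.symm r) i b)) (x i) (y i))]
  simp only [Equiv.symm_apply_apply, Matrix.of_apply]
  set n := ∑ i, ((x i : ℕ)) with hn
  set m := ∑ i, ((y i : ℕ)) with hm
  have key : ∀ r : Fin K × Fin 8,
      (∏ i, V r i (x i) * star (V r i (y i)))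
        = ((Real.sqrt (w r.1 / 8) : ℝ) : ℂ) ^ 2
          * (((Real.sqrt (A r.1) : ℝ) : ℂ) ^ (4 - n) * ((Real.sqrt (A r.1) : ℝ) : ℂ) ^ (4 - m))
          * (((Real.sqrt (B r.1) : ℝ) : ℂ) ^ n * ((Real.sqrt (B r.1) : ℝ) : ℂ) ^ m)
          * (zet ^ n * (star zet) ^ m) ^ (r.2 : ℕ) := by
    intro r
    rw [Finset.prod_mul_distrib]
    have hx : (∏ i, V r i (x i))
        = ((Real.sqrt (w r.1 / 8) : ℝ) : ℂ)
          * (((Real.sqrt (A r.1) : ℝ) : ℂ) ^ (4 - n)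
            * (((Real.sqrt (B r.1) : ℝ) : ℂ) * zet ^ (r.2 : ℕ)) ^ n) := by
      simp only [hV]
      rw [Finset.prod_mul_distrib, prod_if_zero, prod_ite_pow]
    have hy : (∏ i, V r i (y i))
        = ((Real.sqrt (w r.1 / 8) : ℝ) : ℂ)
          * (((Real.sqrt (A r.1) : ℝ) : ℂ) ^ (4 - m)
            * (((Real.sqrt (B r.1) : ℝ) : ℂ) * zet ^ (r.2 : ℕ)) ^ m) := by
      simp only [hV]
      rw [Finset.prod_mul_distrib, prod_if_zero, prod_ite_pow]
    have hystar : (∏ i, star (V r i (y i))) = star (∏ i, V r i (y i)) :=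
      (star_prod _ _).symm
    rw [hx, hystar, hy]
    simp only [star_mul', star_pow, Complex.star_def, Complex.conj_ofReal, map_mul, map_pow]
    rw [show (starRingEnd ℂ) zet = star zet from rfl]
    ring
  rw [Fintype.sum_prod_type]
  have inner : ∀ k : Fin K, ∑ j : Fin 8, (∏ i, V (k, j) i (x i) * star (V (k, j) i (y i)))
      = ((Real.sqrt (w k / 8) : ℝ) : ℂ) ^ 2
          * (((Real.sqrt (A k) : ℝ) : ℂ) ^ (4 - n) * ((Real.sqrt (A k) : ℝ) : ℂ) ^ (4 - m))
          * (((Real.sqrt (B k) : ℝ) : ℂ) ^ n * ((Real.sqrt (B k) : ℝ) : ℂ) ^ m)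
          * (if n = m then (8 : ℂ) else 0) := by
    intro k
    rw [show (∑ j : Fin 8, (∏ i, V (k, j) i (x i) * star (V (k, j) i (y i))))
        = ∑ j : Fin 8, ((Real.sqrt (w k / 8) : ℝ) : ℂ) ^ 2
          * (((Real.sqrt (A k) : ℝ) : ℂ) ^ (4 - n) * ((Real.sqrt (A k) : ℝ) : ℂ) ^ (4 - m))
          * (((Real.sqrt (B k) : ℝ) : ℂ) ^ n * ((Real.sqrt (B k) : ℝ) : ℂ) ^ m)
          * (zet ^ n * (star zet) ^ m) ^ (j : ℕ)
      from Finset.sum_congr rfl fun j _ => key (k, j)]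
    rw [← Finset.mul_sum]
    rw [phase_sum n m (hn ▸ wt_le x) (hm ▸ wt_le y)]
  rw [Finset.sum_congr rfl (fun k _ => inner k)]
  rw [rhoDS_apply q x y, ← hn, ← hm]
  by_cases h : n = m
  · rw [if_pos h, ← h]
    simp only [eq_self_iff_true, if_true]
    have hcast : ∀ k : Fin K,
        ((Real.sqrt (w k / 8) : ℝ) : ℂ) ^ 2
          * (((Real.sqrt (A k) : ℝ) : ℂ) ^ (4 - n) * ((Real.sqrt (A k) : ℝ) : ℂ) ^ (4 - n))
          * (((Real.sqrt (B k) : ℝ) : ℂ) ^ n * ((Real.sqrt (B k) : ℝ) : ℂ) ^ n)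
          * (8 : ℂ)
        = (((w k * A k ^ (4 - n) * B k ^ n : ℝ)) : ℂ) := by
      intro k
      have h1 : (Real.sqrt (w k / 8)) ^ 2 = w k / 8 :=
        Real.sq_sqrt (by have := hw k; positivity)
      have h2 : (Real.sqrt (A k)) ^ (4 - n) * (Real.sqrt (A k)) ^ (4 - n) = A k ^ (4 - n) := by
        rw [← mul_pow, Real.mul_self_sqrt (hA k)]
      have h3 : (Real.sqrt (B k)) ^ n * (Real.sqrt (B k)) ^ n = B k ^ n := by
        rw [← mul_pow, Real.mul_self_sqrt (hB k)]
      have hstep : ((Real.sqrt (w k / 8) : ℝ) : ℂ) ^ 2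
          * (((Real.sqrt (A k) : ℝ) : ℂ) ^ (4 - n) * ((Real.sqrt (A k) : ℝ) : ℂ) ^ (4 - n))
          * (((Real.sqrt (B k) : ℝ) : ℂ) ^ n * ((Real.sqrt (B k) : ℝ) : ℂ) ^ n)
          * (8 : ℂ)
          = ((((Real.sqrt (w k / 8)) ^ 2
              * ((Real.sqrt (A k)) ^ (4 - n) * (Real.sqrt (A k)) ^ (4 - n))
              * ((Real.sqrt (B k)) ^ n * (Real.sqrt (B k)) ^ n) * 8 : ℝ)) : ℂ) := by
        push_cast
        ring
      rw [hstep, h1, h2, h3]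
      push_cast
      ring
    rw [Finset.sum_congr rfl (fun k _ => hcast k)]
    rw [← Complex.ofReal_sum]
    rw [hmom n (hn ▸ wt_le x)]
  · rw [if_neg h]
    simp only [if_neg h]
    simp

lemma repq_congr {q q' : ℕ → ℝ} (h : RepQ q) (he : ∀ n ≤ 4, q' n = q n) : RepQ q' := by
  obtain ⟨K, w, A, B, hw, hA, hB, hmom⟩ := h
  exact ⟨K, w, A, B, hw, hA, hB, fun n hn => by rw [he n hn]; exact hmom n hn⟩

lemma repq_combo {q1 q2 : ℕ → ℝ} (h1 : RepQ q1) (h2 : RepQ q2) {c1 c2 : ℝ}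
    (hc1 : 0 ≤ c1) (hc2 : 0 ≤ c2) : RepQ (fun n => c1 * q1 n + c2 * q2 n) := by
  obtain ⟨K1, w1, A1, B1, hw1, hA1, hB1, hm1⟩ := h1
  obtain ⟨K2, w2, A2, B2, hw2, hA2, hB2, hm2⟩ := h2
  refine ⟨K1 + K2, Fin.append (fun k => c1 * w1 k) (fun k => c2 * w2 k),
    Fin.append A1 A2, Fin.append B1 B2, ?_, ?_, ?_, ?_⟩
  · intro k
    refine Fin.addCases (fun i => ?_) (fun i => ?_) k
    · rw [Fin.append_left]; exact mul_nonneg hc1 (hw1 i)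
    · rw [Fin.append_right]; exact mul_nonneg hc2 (hw2 i)
  · intro k
    refine Fin.addCases (fun i => ?_) (fun i => ?_) k
    · rw [Fin.append_left]; exact hA1 i
    · rw [Fin.append_right]; exact hA2 i
  · intro k
    refine Fin.addCases (fun i => ?_) (fun i => ?_) k
    · rw [Fin.append_left]; exact hB1 i
    · rw [Fin.append_right]; exact hB2 i
  · intro n hn
    rw [Fin.sum_univ_add]
    simp only [Fin.append_left, Fin.append_right]
    have e1 : ∑ i : Fin K1, c1 * w1 i * A1 i ^ (4 - n) * B1 i ^ n
        = c1 * (q1 n / (Nat.choose 4 n : ℝ)) := by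
      rw [← hm1 n hn, Finset.mul_sum]
      exact Finset.sum_congr rfl fun i _ => by ring
    have e2 : ∑ i : Fin K2, c2 * w2 i * A2 i ^ (4 - n) * B2 i ^ n
        = c2 * (q2 n / (Nat.choose 4 n : ℝ)) := by
      rw [← hm2 n hn, Finset.mul_sum]
      exact Finset.sum_congr rfl fun i _ => by ring
    rw [e1, e2]
    ring

lemma repQ0 (α : ℝ) (h : -(5/12 : ℝ) ≤ α) :
    RepQ (fun n => 1 + α * (if n = 0 then 1 else 0)) := by
  refine ⟨5, ![5/12 + α, 8/33, 1/3, 1/132, 35/96], ![1,1,1,1,0], ![0, 1/4, 1/2, 3, 1],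
    ?_, ?_, ?_, ?_⟩
  · intro k
    fin_cases k <;> simp <;> linarith
  · intro k; fin_cases k <;> norm_num
  · intro k; fin_cases k <;> norm_num
  · intro n hn
    interval_cases n <;>
      simp [Fin.sum_univ_five] <;> norm_num [Nat.choose] <;> ring

def aL : ℝ := (3 * Real.sqrt 6 - 8) / 2
def aU : ℝ := 5 * (Real.sqrt 21 - 3) / 18

lemma sqrt6_sq : Real.sqrt 6 * Real.sqrt 6 = 6 := Real.mul_self_sqrt (by norm_num)
lemma sqrt21_sq : Real.sqrt 21 * Real.sqrt 21 = 21 := Real.mul_self_sqrt (by norm_num)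
lemma sqrt6_gt : (2.449 : ℝ) < Real.sqrt 6 := by
  nlinarith [sqrt6_sq, Real.sqrt_nonneg 6]
lemma sqrt6_lt : Real.sqrt 6 < 2.4495 := by
  nlinarith [sqrt6_sq, Real.sqrt_nonneg 6]
lemma sqrt21_gt : (4.5825 : ℝ) < Real.sqrt 21 := by
  nlinarith [sqrt21_sq, Real.sqrt_nonneg 21]
lemma sqrt21_lt : Real.sqrt 21 < 4.5826 := by
  nlinarith [sqrt21_sq, Real.sqrt_nonneg 21]

lemma repQ4 (α : ℝ) (h : -(5/12 : ℝ) ≤ α) :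
    RepQ (fun n => 1 + α * (if n = 4 then 1 else 0)) := by
  refine ⟨5, ![5/12 + α, 8/33, 1/3, 1/132, 35/96], ![0, 1/4, 1/2, 3, 1], ![1,1,1,1,0],
    ?_, ?_, ?_, ?_⟩
  · intro k
    fin_cases k <;> simp <;> linarith
  · intro k; fin_cases k <;> norm_num
  · intro k; fin_cases k <;> norm_num
  · intro n hn
    interval_cases n <;>
      simp [Fin.sum_univ_five] <;> norm_num [Nat.choose] <;> ring

lemma repQ1L :
    RepQ (fun n => 1 + aL * (if n = 1 then 1 else 0)) := by
  refine ⟨5, ![161/24 - 39/16 * Real.sqrt 6, -176/21 + 24/7 * Real.sqrt 6,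
      8/3 - Real.sqrt 6, 1/168 + 1/112 * Real.sqrt 6, 37/48 - 3/32 * Real.sqrt 6],
    ![1,1,1,1,0], ![0, 1/4, 1/2, 2, 1], ?_, ?_, ?_, ?_⟩
  · intro k
    have h1 := sqrt6_gt; have h2 := sqrt6_lt
    fin_cases k <;> simp <;> nlinarith
  · intro k; fin_cases k <;> norm_num
  · intro k; fin_cases k <;> norm_num
  · intro n hn
    interval_cases n <;>
      simp [Fin.sum_univ_five, aL] <;> norm_num [Nat.choose] <;> ring

lemma repQ2U :
    RepQ (fun n => 1 + aU * (if n = 2 then 1 else 0)) := by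
  refine ⟨5, ![-95/108 + 55/162 * Real.sqrt 21, 64/27 - 40/81 * Real.sqrt 21,
      -85/108 + 35/162 * Real.sqrt 21, 8/27 - 5/81 * Real.sqrt 21,
      5/18 + 85/864 * Real.sqrt 21],
    ![1,1,1,1,0], ![0, 1/4, 1, 3/2, 1], ?_, ?_, ?_, ?_⟩
  · intro k
    have h1 := sqrt21_gt; have h2 := sqrt21_lt
    fin_cases k <;> simp <;> nlinarith
  · intro k; fin_cases k <;> norm_num
  · intro k; fin_cases k <;> norm_num
  · intro n hn
    interval_cases n <;>
      simp [Fin.sum_univ_five, aU] <;> norm_num [Nat.choose] <;> ring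

lemma flat_rep (s q m1 m2 m3 : ℝ) (hq : 0 ≤ q) (hm1 : 0 ≤ m1) (hs2 : 2 * m1 ≤ s)
    (hdisc : 0 < s ^ 2 - 4 * q)
    (hM2 : s * m1 - q = m2) (hM3 : s * m2 - q * m1 = m3) (hM4 : s * m3 - q * m2 = 1)
    (hkey : 0 ≤ m1 * s - m1 ^ 2 - q) :
    ∃ w1 w2 t1 t2 : ℝ, 0 ≤ w1 ∧ 0 ≤ w2 ∧ 0 ≤ t1 ∧ 0 ≤ t2 ∧
      w1 + w2 = 1 ∧ w1 * t1 + w2 * t2 = m1 ∧ w1 * t1 ^ 2 + w2 * t2 ^ 2 = m2 ∧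
      w1 * t1 ^ 3 + w2 * t2 ^ 3 = m3 ∧ w1 * t1 ^ 4 + w2 * t2 ^ 4 = 1 := by
  have hs : 0 ≤ s := le_trans (by linarith) hs2
  set r : ℝ := Real.sqrt (s ^ 2 - 4 * q) with hrdef
  have hr2 : r ^ 2 = s ^ 2 - 4 * q := Real.sq_sqrt hdisc.le
  have hrpos : 0 < r := Real.sqrt_pos.mpr hdisc
  have hrne : r ≠ 0 := ne_of_gt hrpos
  have hrles : r ≤ s := by nlinarith [hrpos, hr2]
  set t1 : ℝ := (s - r) / 2 with ht1def
  set t2 : ℝ := (s + r) / 2 with ht2def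
  set w1 : ℝ := (t2 - m1) / r with hw1def
  set w2 : ℝ := (m1 - t1) / r with hw2def
  have ht1sq : t1 ^ 2 = s * t1 - q := by
    rw [ht1def]; field_simp; linear_combination hr2
  have ht2sq : t2 ^ 2 = s * t2 - q := by
    rw [ht2def]; field_simp; linear_combination hr2
  have S0 : w1 + w2 = 1 := by
    rw [hw1def, hw2def, ht1def, ht2def]; field_simp; ring
  have S1 : w1 * t1 + w2 * t2 = m1 := by
    rw [hw1def, hw2def, ht1def, ht2def]; field_simp; ring
  have S2 : w1 * t1 ^ 2 + w2 * t2 ^ 2 = m2 := by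
    have e : w1 * t1 ^ 2 + w2 * t2 ^ 2 = s * (w1 * t1 + w2 * t2) - q * (w1 + w2) := by
      linear_combination w1 * ht1sq + w2 * ht2sq
    rw [e, S0, S1, mul_one]; exact hM2
  have S3 : w1 * t1 ^ 3 + w2 * t2 ^ 3 = m3 := by
    have e : w1 * t1 ^ 3 + w2 * t2 ^ 3
        = s * (w1 * t1 ^ 2 + w2 * t2 ^ 2) - q * (w1 * t1 + w2 * t2) := by
      linear_combination (w1 * t1) * ht1sq + (w2 * t2) * ht2sq
    rw [e, S2, S1]; exact hM3
  have S4 : w1 * t1 ^ 4 + w2 * t2 ^ 4 = 1 := by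
    have e : w1 * t1 ^ 4 + w2 * t2 ^ 4
        = s * (w1 * t1 ^ 3 + w2 * t2 ^ 3) - q * (w1 * t1 ^ 2 + w2 * t2 ^ 2) := by
      linear_combination (w1 * t1 ^ 2) * ht1sq + (w2 * t2 ^ 2) * ht2sq
    rw [e, S3, S2]; exact hM4
  have ht1nn : 0 ≤ t1 := by rw [ht1def]; linarith
  have ht2nn : 0 ≤ t2 := by rw [ht2def]; positivity
  have hw1nn : 0 ≤ w1 := by
    apply div_nonneg _ hrpos.le
    rw [ht2def]; linarith [hrpos.le]
  have hw2nn : 0 ≤ w2 := by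
    apply div_nonneg _ hrpos.le
    have hge : s - 2 * m1 ≤ r := by nlinarith [hr2, hrpos]
    rw [ht1def]; linarith
  exact ⟨w1, w2, t1, t2, hw1nn, hw2nn, ht1nn, ht2nn, S0, S1, S2, S3, S4⟩

lemma rep_of_flat {β : ℝ} {j : ℕ} (m1 m2 m3 : ℝ)
    (h0 : (1:ℝ) + β * (if 0 = j then 1 else 0) = 1)
    (h1 : (1:ℝ) + β * (if 1 = j then 1 else 0) = 4 * m1)
    (h2 : (1:ℝ) + β * (if 2 = j then 1 else 0) = 6 * m2)
    (h3 : (1:ℝ) + β * (if 3 = j then 1 else 0) = 4 * m3)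
    (h4 : (1:ℝ) + β * (if 4 = j then 1 else 0) = 1)
    (hex : ∃ w1 w2 t1 t2 : ℝ, 0 ≤ w1 ∧ 0 ≤ w2 ∧ 0 ≤ t1 ∧ 0 ≤ t2 ∧
      w1 + w2 = 1 ∧ w1 * t1 + w2 * t2 = m1 ∧ w1 * t1 ^ 2 + w2 * t2 ^ 2 = m2 ∧
      w1 * t1 ^ 3 + w2 * t2 ^ 3 = m3 ∧ w1 * t1 ^ 4 + w2 * t2 ^ 4 = 1) :
    RepQ (fun n => 1 + β * (if n = j then 1 else 0)) := by
  obtain ⟨w1, w2, t1, t2, hw1, hw2, ht1, ht2, S0, S1, S2, S3, S4⟩ := hex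
  refine ⟨2, ![w1, w2], ![1, 1], ![t1, t2], ?_, ?_, ?_, ?_⟩
  · intro k; fin_cases k <;> assumption
  · intro k; fin_cases k <;> norm_num
  · intro k; fin_cases k <;> assumption
  · intro n hn
    interval_cases n <;>
      simp only [Fin.sum_univ_two, Matrix.cons_val_zero, Matrix.cons_val_one, Matrix.head_cons,
        pow_zero, pow_one, one_pow, mul_one, one_mul]
    · rw [h0, show ((Nat.choose 4 0 : ℕ) : ℝ) = 1 from by norm_num]; linarith [S0]
    · rw [h1, show ((Nat.choose 4 1 : ℕ) : ℝ) = 4 from by norm_num]; linarith [S1]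
    · rw [h2, show ((Nat.choose 4 2 : ℕ) : ℝ) = 6 from by norm_num [Nat.choose]]; linarith [S2]
    · rw [h3, show ((Nat.choose 4 3 : ℕ) : ℝ) = 4 from by norm_num]; linarith [S3]
    · rw [h4, show ((Nat.choose 4 4 : ℕ) : ℝ) = 1 from by norm_num]; linarith [S4]

lemma rep_of_flat_rev {β : ℝ} {j : ℕ} (m1 m2 m3 : ℝ)
    (h0 : (1:ℝ) + β * (if 0 = j then 1 else 0) = 1)
    (h1 : (1:ℝ) + β * (if 1 = j then 1 else 0) = 4 * m3)
    (h2 : (1:ℝ) + β * (if 2 = j then 1 else 0) = 6 * m2)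
    (h3 : (1:ℝ) + β * (if 3 = j then 1 else 0) = 4 * m1)
    (h4 : (1:ℝ) + β * (if 4 = j then 1 else 0) = 1)
    (hex : ∃ w1 w2 t1 t2 : ℝ, 0 ≤ w1 ∧ 0 ≤ w2 ∧ 0 ≤ t1 ∧ 0 ≤ t2 ∧
      w1 + w2 = 1 ∧ w1 * t1 + w2 * t2 = m1 ∧ w1 * t1 ^ 2 + w2 * t2 ^ 2 = m2 ∧
      w1 * t1 ^ 3 + w2 * t2 ^ 3 = m3 ∧ w1 * t1 ^ 4 + w2 * t2 ^ 4 = 1) :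
    RepQ (fun n => 1 + β * (if n = j then 1 else 0)) := by
  obtain ⟨w1, w2, t1, t2, hw1, hw2, ht1, ht2, S0, S1, S2, S3, S4⟩ := hex
  refine ⟨2, ![w1, w2], ![t1, t2], ![1, 1], ?_, ?_, ?_, ?_⟩
  · intro k; fin_cases k <;> assumption
  · intro k; fin_cases k <;> assumption
  · intro k; fin_cases k <;> norm_num
  · intro n hn
    interval_cases n <;>
      simp only [Fin.sum_univ_two, Matrix.cons_val_zero, Matrix.cons_val_one, Matrix.head_cons,
        pow_zero, pow_one, one_pow, mul_one, one_mul]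
    · rw [h0, show ((Nat.choose 4 0 : ℕ) : ℝ) = 1 from by norm_num]; linarith [S4]
    · rw [h1, show ((Nat.choose 4 1 : ℕ) : ℝ) = 4 from by norm_num]; linarith [S3]
    · rw [h2, show ((Nat.choose 4 2 : ℕ) : ℝ) = 6 from by norm_num [Nat.choose]]; linarith [S2]
    · rw [h3, show ((Nat.choose 4 3 : ℕ) : ℝ) = 4 from by norm_num [Nat.choose]]; linarith [S1]
    · rw [h4, show ((Nat.choose 4 4 : ℕ) : ℝ) = 1 from by norm_num]; linarith [S0]

lemma flat21 : ∃ w1 w2 t1 t2 : ℝ, 0 ≤ w1 ∧ 0 ≤ w2 ∧ 0 ≤ t1 ∧ 0 ≤ t2 ∧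
      w1 + w2 = 1 ∧ w1 * t1 + w2 * t2 = (3 + 5 * Real.sqrt 21) / 72 ∧
      w1 * t1 ^ 2 + w2 * t2 ^ 2 = 1/6 ∧
      w1 * t1 ^ 3 + w2 * t2 ^ 3 = 1/4 ∧ w1 * t1 ^ 4 + w2 * t2 ^ 4 = 1 := by
  have h21 := sqrt21_sq
  have hg := sqrt21_gt; have hl := sqrt21_lt
  have hnn := Real.sqrt_nonneg 21
  refine flat_rep ((21 + Real.sqrt 21) / 5) ((3 + 3 * Real.sqrt 21) / 10) _ _ _
    (by positivity) (by positivity) (by nlinarith) (by nlinarith)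
    (by linear_combination (1/72 : ℝ) * h21)
    (by linear_combination (-1/48 : ℝ) * h21)
    (by ring)
    (by nlinarith)

lemma flat6 : ∃ w1 w2 t1 t2 : ℝ, 0 ≤ w1 ∧ 0 ≤ w2 ∧ 0 ≤ t1 ∧ 0 ≤ t2 ∧
      w1 + w2 = 1 ∧ w1 * t1 + w2 * t2 = 1/4 ∧
      w1 * t1 ^ 2 + w2 * t2 ^ 2 = (Real.sqrt 6 - 2) / 4 ∧
      w1 * t1 ^ 3 + w2 * t2 ^ 3 = 1/4 ∧ w1 * t1 ^ 4 + w2 * t2 ^ 4 = 1 := by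
  have h6 := sqrt6_sq
  have hg := sqrt6_gt; have hl := sqrt6_lt
  have hnn := Real.sqrt_nonneg 6
  refine flat_rep (2 + Real.sqrt 6) 1 _ _ _
    (by norm_num) (by norm_num) (by nlinarith) (by nlinarith)
    (by ring)
    (by linear_combination (1/4 : ℝ) * h6)
    (by ring)
    (by nlinarith)

lemma repQ1U : RepQ (fun n => 1 + aU * (if n = 1 then 1 else 0)) := by
  refine rep_of_flat _ _ _ ?_ ?_ ?_ ?_ ?_ flat21 <;> norm_num [aU] <;> ring

lemma repQ3U : RepQ (fun n => 1 + aU * (if n = 3 then 1 else 0)) := by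
  refine rep_of_flat_rev _ _ _ ?_ ?_ ?_ ?_ ?_ flat21 <;> norm_num [aU] <;> ring

lemma repQ2L : RepQ (fun n => 1 + aL * (if n = 2 then 1 else 0)) := by
  refine rep_of_flat _ _ _ ?_ ?_ ?_ ?_ ?_ flat6 <;> norm_num [aL] <;> ring

lemma repQ3L :
    RepQ (fun n => 1 + aL * (if n = 3 then 1 else 0)) := by
  refine ⟨5, ![161/24 - 39/16 * Real.sqrt 6, -176/21 + 24/7 * Real.sqrt 6,
      8/3 - Real.sqrt 6, 1/168 + 1/112 * Real.sqrt 6, 37/48 - 3/32 * Real.sqrt 6],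
    ![0, 1/4, 1/2, 2, 1], ![1,1,1,1,0], ?_, ?_, ?_, ?_⟩
  · intro k
    have h1 := sqrt6_gt; have h2 := sqrt6_lt
    fin_cases k <;> simp <;> nlinarith
  · intro k; fin_cases k <;> norm_num
  · intro k; fin_cases k <;> norm_num
  · intro n hn
    interval_cases n <;>
      simp [Fin.sum_univ_five, aL] <;> norm_num [Nat.choose] <;> ring

lemma aD_pos : 0 < aU - aL := by
  have hg := sqrt21_gt; have hl := sqrt6_lt
  rw [aU, aL]
  nlinarith

lemma rep_middle (α : ℝ) (hα1 : aL ≤ α) (hα2 : α ≤ aU) (j : ℕ)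
    (hL : RepQ (fun n => 1 + aL * (if n = j then 1 else 0)))
    (hU : RepQ (fun n => 1 + aU * (if n = j then 1 else 0))) :
    RepQ (fun n => 1 + α * (if n = j then 1 else 0)) := by
  have hD := aD_pos
  have hc1 : 0 ≤ (aU - α) / (aU - aL) := div_nonneg (by linarith) hD.le
  have hc2 : 0 ≤ (α - aL) / (aU - aL) := div_nonneg (by linarith) hD.le
  refine repq_congr (repq_combo hL hU hc1 hc2) fun n _ => ?_
  have hne : aU - aL ≠ 0 := ne_of_gt hD
  by_cases h : n = j <;> simp only [h, if_true, if_false] <;> field_simp <;> ring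

lemma rep_total (p : ℕ → ℝ) (hp : ∀ k ≤ 4, 0 ≤ p k)
    (hsum : ∑ k ∈ Finset.range 5, p k = 1)
    (α : ℝ) (hα1 : aL ≤ α) (hα2 : α ≤ aU) :
    RepQ (fun n => 1 + α * p n) := by
  have hL5 : aL ≤ α → -(5/12 : ℝ) ≤ α := by
    have := sqrt6_gt
    rw [aL]; intro h; nlinarith
  have R0 := repQ0 α (hL5 hα1)
  have R4 := repQ4 α (hL5 hα1)
  have R1 := rep_middle α hα1 hα2 1 repQ1L repQ1U
  have R2 := rep_middle α hα1 hα2 2 repQ2L repQ2U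
  have R3 := rep_middle α hα1 hα2 3 repQ3L repQ3U
  have h01 := repq_combo R0 R1 (hp 0 (by norm_num)) (hp 1 (by norm_num))
  have h012 := repq_combo h01 R2 (zero_le_one) (hp 2 (by norm_num))
  have h0123 := repq_combo h012 R3 (zero_le_one) (hp 3 (by norm_num))
  have h01234 := repq_combo h0123 R4 (zero_le_one) (hp 4 (by norm_num))
  refine repq_congr h01234 fun n hn => ?_
  simp only [Finset.sum_range_succ, Finset.sum_range_zero, zero_add] at hsum
  interval_cases n <;> norm_num <;> linear_combination -hsum


/-- For four-qubit diagonal symmetric states, `𝟙_S + α ρ_DS` is fully separable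
for `(3√6 - 8)/2 ≤ α ≤ 5(√21 - 3)/18`. -/
theorem stmt10 (p : ℕ → ℝ) (hp : ∀ k ≤ 4, 0 ≤ p k)
    (hsum : ∑ k ∈ Finset.range 5, p k = 1)
    (α : ℝ) (hα1 : (3 * Real.sqrt 6 - 8) / 2 ≤ α)
    (hα2 : α ≤ 5 * (Real.sqrt 21 - 3) / 18) :
    FullySep (symProj 4 + (α : ℂ) • rhoDS 4 p) := by
  have hmat : symProj 4 + (α : ℂ) • rhoDS 4 p = rhoDS 4 (fun k => 1 + α * p k) := by
    ext x y
    simp only [Matrix.add_apply, Matrix.smul_apply, symProj, rhoDS, smul_eq_mul,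
      Finset.mul_sum, ← Finset.sum_add_distrib]
    refine Finset.sum_congr rfl fun k _ => ?_
    push_cast
    ring
  rw [hmat]
  exact repq_fullySep _ (rep_total p hp hsum α hα1 hα2)
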